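/- Let A be an N×s complex matrix and B an N×t complex matrix with A*A = I_s and B*B = I_t. Put U = (2·B·B* − I_N)·(2·A·A* − I_N). Then for every complex number λ with λ ≠ 1 and λ ≠ −1, det(λ·I_N − U) = (λ−1)^(N−s−t) · (λ+1)^(s−t) · det((λ+1)²·I_t − 4λ·(B*·A)·(A*·B)), where the exponents N−s−t and s−t are integers (possibly negative). -/

import Mathlib

open Matrix

/-- Corollary 3.4: characteristic-polynomial form of the key lemma. For isometries
`A` (N×s), `B` (N×t) and `U = (2 B Bᴴ - I)(2 A Aᴴ - I)`,
`det(λ I - U) = (λ-1)^(N-s-t) (λ+1)^(s-t) det((λ+1)² I_t - 4λ Bᴴ A Aᴴ B)`. -/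
theorem staggered_char_poly
    (N s t : ℕ) (A : Matrix (Fin N) (Fin s) ℂ) (B : Matrix (Fin N) (Fin t) ℂ)
    (hA : Aᴴ * A = 1) (hB : Bᴴ * B = 1) (lam : ℂ) (h1 : lam ≠ 1) (h2 : lam ≠ -1) :
    det (lam • (1 : Matrix (Fin N) (Fin N) ℂ) -
        ((2 : ℂ) • (B * Bᴴ) - 1) * ((2 : ℂ) • (A * Aᴴ) - 1))
      = (lam - 1) ^ ((N : ℤ) - (s : ℤ) - (t : ℤ)) * (lam + 1) ^ ((s : ℤ) - (t : ℤ)) *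
        det ((lam + 1) ^ 2 • (1 : Matrix (Fin t) (Fin t) ℂ) -
          (4 * lam) • (Bᴴ * A * (Aᴴ * B))) := by
  have ha : lam - 1 ≠ 0 := sub_ne_zero.mpr h1
  have hb : lam + 1 ≠ 0 := fun h => h2 (by linear_combination h)
  have hMM : (A * Aᴴ) * (A * Aᴴ) = A * Aᴴ := by
    rw [Matrix.mul_assoc, ← Matrix.mul_assoc Aᴴ A Aᴴ, hA, Matrix.one_mul]
  have hUA2 : ((2 : ℂ) • (A * Aᴴ) - 1) * ((2 : ℂ) • (A * Aᴴ) - 1) = 1 := by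
    simp only [Matrix.sub_mul, Matrix.mul_sub, Matrix.smul_mul, Matrix.mul_smul, smul_smul,
      Matrix.one_mul, Matrix.mul_one, hMM]
    module
  have key : ∀ V W : Matrix (Fin N) (Fin N) ℂ, V * V = 1 →
      lam • (1 : Matrix (Fin N) (Fin N) ℂ) - W * V = (W - lam • V) * (-V) := by
    intro V W hV
    rw [Matrix.mul_neg, Matrix.sub_mul, Matrix.smul_mul, hV, neg_sub, sub_eq_add_neg]
  rw [key _ _ hUA2, det_mul]
  -- det of -U_A
  have hdetUA : det (-((2 : ℂ) • (A * Aᴴ) - 1)) = (-1 : ℂ) ^ s := by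
    have e1 : -((2 : ℂ) • (A * Aᴴ) - 1) =
        (1 : Matrix (Fin N) (Fin N) ℂ) + A * ((-2 : ℂ) • Aᴴ) := by
      rw [Matrix.mul_smul]; module
    rw [e1, det_one_add_mul_comm, Matrix.smul_mul, hA]
    have e2 : (1 : Matrix (Fin s) (Fin s) ℂ) + (-2 : ℂ) • (1 : Matrix (Fin s) (Fin s) ℂ)
        = (-1 : ℂ) • 1 := by module
    rw [e2, det_smul, det_one, Fintype.card_fin, mul_one]
  rw [hdetUA]
  -- low-rank factorization of U_B - lam • U_A
  have e3 : ((2 : ℂ) • (B * Bᴴ) - 1) - lam • ((2 : ℂ) • (A * Aᴴ) - 1) =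
      (lam - 1) • ((1 : Matrix (Fin N) (Fin N) ℂ) +
        fromCols A B * ((lam - 1)⁻¹ •
          fromRows ((-2 * lam) • Aᴴ) ((2 : ℂ) • Bᴴ))) := by
    rw [Matrix.mul_smul, fromCols_mul_fromRows, Matrix.mul_smul, Matrix.mul_smul,
      smul_add, smul_smul, mul_inv_cancel₀ ha, one_smul]
    module
  rw [e3, det_smul, det_one_add_mul_comm, Fintype.card_fin]
  -- compute the (s+t) × (s+t) matrix as blocks
  have e4 : (1 : Matrix (Fin s ⊕ Fin t) (Fin s ⊕ Fin t) ℂ) +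
      (lam - 1)⁻¹ • fromRows ((-2 * lam) • Aᴴ) ((2 : ℂ) • Bᴴ) * fromCols A B =
      fromBlocks ((-(lam + 1) / (lam - 1)) • 1) ((-2 * lam / (lam - 1)) • (Aᴴ * B))
        ((2 / (lam - 1)) • (Bᴴ * A)) (((lam + 1) / (lam - 1)) • 1) := by
    rw [Matrix.smul_mul, fromRows_mul_fromCols, Matrix.smul_mul, Matrix.smul_mul,
      Matrix.smul_mul, Matrix.smul_mul, hA, hB, ← fromBlocks_one, fromBlocks_smul,
      fromBlocks_add]
    have h11 : (1 : ℂ) + (lam - 1)⁻¹ * (-2 * lam) = -(lam + 1) / (lam - 1) := by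
      field_simp; ring
    have h12 : (lam - 1)⁻¹ * (-2 * lam) = -2 * lam / (lam - 1) := by ring
    have h21 : (lam - 1)⁻¹ * (2 : ℂ) = 2 / (lam - 1) := by ring
    have h22 : (1 : ℂ) + 2 / (lam - 1) = (lam + 1) / (lam - 1) := by
      field_simp; ring
    rw [smul_smul, smul_smul, smul_smul, smul_smul, zero_add, zero_add,
      show (1 : Matrix (Fin s) (Fin s) ℂ) + ((lam - 1)⁻¹ * (-2 * lam)) • 1 =
        ((1 : ℂ) + (lam - 1)⁻¹ * (-2 * lam)) • 1 from by rw [add_smul, one_smul],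
      show (1 : Matrix (Fin t) (Fin t) ℂ) + ((lam - 1)⁻¹ * (2 : ℂ)) • 1 =
        ((1 : ℂ) + (lam - 1)⁻¹ * (2 : ℂ)) • 1 from by rw [add_smul, one_smul],
      h11, h12, h21, h22]
  rw [e4]
  have hαne : -(lam + 1) / (lam - 1) ≠ 0 :=
    div_ne_zero (neg_ne_zero.mpr hb) ha
  haveI : Invertible ((-(lam + 1) / (lam - 1)) • (1 : Matrix (Fin s) (Fin s) ℂ)) :=
    ⟨(-(lam + 1) / (lam - 1))⁻¹ • (1 : Matrix (Fin s) (Fin s) ℂ),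
      by rw [smul_mul_smul_comm, inv_mul_cancel₀ hαne, Matrix.one_mul, one_smul],
      by rw [smul_mul_smul_comm, mul_inv_cancel₀ hαne, Matrix.one_mul, one_smul]⟩
  rw [det_fromBlocks₁₁]
  have hinv : ⅟ ((-(lam + 1) / (lam - 1)) • (1 : Matrix (Fin s) (Fin s) ℂ)) =
      (-(lam + 1) / (lam - 1))⁻¹ • (1 : Matrix (Fin s) (Fin s) ℂ) := by
    apply invOf_eq_right_inv
    rw [smul_mul_smul_comm, mul_inv_cancel₀ hαne, Matrix.one_mul, one_smul]
  rw [hinv, det_smul, det_one, Fintype.card_fin, mul_one]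
  -- the Schur complement
  have e5 : ((lam + 1) / (lam - 1)) • (1 : Matrix (Fin t) (Fin t) ℂ) -
      (2 / (lam - 1)) • (Bᴴ * A) * ((-(lam + 1) / (lam - 1))⁻¹ • (1 : Matrix (Fin s) (Fin s) ℂ))
        * ((-2 * lam / (lam - 1)) • (Aᴴ * B)) =
      ((lam * lam - 1)⁻¹) • ((lam + 1) ^ 2 • (1 : Matrix (Fin t) (Fin t) ℂ) -
        (4 * lam) • (Bᴴ * A * (Aᴴ * B))) := by
    simp only [Matrix.smul_mul, Matrix.mul_smul, Matrix.mul_one, smul_smul, smul_sub,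
      Matrix.mul_assoc]
    have hm : lam * lam - 1 ≠ 0 := by
      have e : lam * lam - 1 = (lam - 1) * (lam + 1) := by ring
      rw [e]; exact mul_ne_zero ha hb
    congr 1
    · congr 1
      rw [inv_mul_eq_div, div_eq_div_iff ha hm]
      ring
    · congr 1
      rw [inv_div, div_mul_div_comm, div_mul_div_comm, inv_mul_eq_div,
        div_eq_div_iff (mul_ne_zero ha (mul_ne_zero (neg_ne_zero.mpr hb) ha)) hm]
      ring
  rw [e5, det_smul, Fintype.card_fin]
  -- final scalar computation
  generalize ((lam + 1) ^ 2 • (1 : Matrix (Fin t) (Fin t) ℂ) -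
      (4 * lam) • (Bᴴ * A * (Aᴴ * B))).det = D
  have final : ∀ x y D : ℂ, x ≠ 0 → y ≠ 0 →
      x ^ N * ((-y / x) ^ s * (((x * y)⁻¹) ^ t * D)) * (-1 : ℂ) ^ s =
        x ^ ((N : ℤ) - s - t) * y ^ ((s : ℤ) - t) * D := by
    intro x y D hx hy
    have k : (-y / x) ^ s * (-1 : ℂ) ^ s = (y / x) ^ s := by
      rw [← mul_pow]; congr 1; ring
    rw [zpow_sub₀ hx, zpow_sub₀ hx, zpow_sub₀ hy, zpow_natCast, zpow_natCast, zpow_natCast,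
      zpow_natCast, zpow_natCast]
    linear_combination (x ^ N * ((x * y)⁻¹) ^ t * D) * k
  rw [show (lam * lam - 1 : ℂ) = (lam - 1) * (lam + 1) from by ring]
  exact final _ _ _ ha hb
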